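/- Let P be a prior function (assigning to every finite type X a set P(X) ⊆ Δ_X), let X and Y be finite types, and let f be a faithful X-Y embedding. Then the induced inference procedure I^P is invariant under f — that is, for all constraints KB, θ ⊆ Δ_X: P(X)|KB ⊆ θ iff P(Y)|f*(KB) ⊆ f*(θ) — if and only if P(X) and P(Y) correspond under f. -/

import Mathlib

/-- A probability measure (probability mass function) on a finite type. -/
structure PM (X : Type) [Fintype X] where
  pm : X → ℝ
  nonneg : ∀ x, 0 ≤ pm x
  total : ∑ x, pm x = 1

namespace PM

variable {X Y : Type} [Fintype X] [Fintype Y]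

/-- The probability of a set `S`: `μ(S) = ∑_{x ∈ S} μ(x)`. -/
noncomputable def prob (μ : PM X) (S : Set X) : ℝ := ∑ x, S.indicator μ.pm x

lemma prob_nonneg (μ : PM X) (S : Set X) : 0 ≤ μ.prob S :=
  Finset.sum_nonneg fun x _ => Set.indicator_apply_nonneg fun _ => μ.nonneg x

/-- Marginal on the first component: `μ_X(A) = μ(A × Y)`. -/
noncomputable def margFst (μ : PM (X × Y)) : PM X where
  pm x := ∑ y, μ.pm (x, y)
  nonneg x := Finset.sum_nonneg fun y _ => μ.nonneg (x, y)
  total := by rw [← μ.total, ← Fintype.sum_prod_type]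

/-- Marginal on the second component: `μ_Y(B) = μ(X × B)`. -/
noncomputable def margSnd (μ : PM (X × Y)) : PM Y where
  pm y := ∑ x, μ.pm (x, y)
  nonneg y := Finset.sum_nonneg fun x _ => μ.nonneg (x, y)
  total := by rw [← μ.total, ← Fintype.sum_prod_type_right]

/-- Conditioning `μ|S`; the junk value `μ` is returned when `μ(S) = 0`. -/
noncomputable def cond (μ : PM X) (S : Set X) : PM X :=
  if h : 0 < μ.prob S then
    { pm := fun x => S.indicator μ.pm x / μ.prob S
      nonneg := fun x =>
        div_nonneg (Set.indicator_apply_nonneg fun _ => μ.nonneg x) (le_of_lt h)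
      total := by
        rw [← Finset.sum_div]
        exact div_self (ne_of_gt h) }
  else μ

end PM

open PM

/-- An `X`-inference procedure: a partial map on sets of probability measures. -/
structure InfProc (X : Type) [Fintype X] where
  dom : Set (Set (PM X))
  map : Set (PM X) → Set (PM X)
  map_subset : ∀ A ∈ dom, map A ⊆ A
  map_empty_iff : ∀ A ∈ dom, (map A = ∅ ↔ A = ∅)

/-- `KB ⊢_I θ`. -/
def Infers {X : Type} [Fintype X] (I : InfProc X) (KB θ : Set (PM X)) : Prop :=
  I.map KB ⊆ θ

section Lift

variable {X Y : Type} [Fintype X] [Fintype Y]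

/-- A constraint on `Δ_X` viewed as a constraint on `Δ_{X×Y}`: `KB↑`. -/
def liftKB (Y : Type) [Fintype Y] (KB : Set (PM X)) : Set (PM (X × Y)) :=
  {μ | margFst μ ∈ KB}

/-- `proj_X(B) = {μ_X : μ ∈ B}`. -/
def projFst (B : Set (PM (X × Y))) : Set (PM X) := margFst '' B

/-- `ψ ⊆ Δ_{X×Y}` is `X`-conservative over `KB ⊆ Δ_X`. -/
def Conservative (KB : Set (PM X)) (ψ : Set (PM (X × Y))) : Prop :=
  projFst (liftKB Y KB ∩ ψ) = KB

end Lift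

/-- Robustness of a finitary inference procedure. -/
def Robust (I : ∀ (X : Type) [Fintype X], InfProc X) : Prop :=
  ∀ (X Y : Type) [Fintype X] [Fintype Y], ∀ KB φ : Set (PM X),
    KB ∈ (I X).dom → ∀ ψ : Set (PM (X × Y)), Conservative KB ψ →
      (Infers (I X) KB φ ↔ Infers (I (X × Y)) (liftKB Y KB ∩ ψ) (liftKB Y φ))

/-- An inference procedure is essentially entailment. -/
def EssEntail {X : Type} [Fintype X] (I : InfProc X) : Prop :=
  ∀ KB ∈ I.dom, ∀ (S : Set X) (α β : ℝ),
    Infers I KB {μ | α < μ.prob S ∧ μ.prob S < β} →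
    KB ⊆ {μ | α ≤ μ.prob S ∧ μ.prob S ≤ β}

def DI1 (I : ∀ (X : Type) [Fintype X], InfProc X) : Prop :=
  ∀ (X : Type) [Fintype X], ∀ (S : Set X) (α β : ℝ), α ≤ β →
    {μ : PM X | α ≤ μ.prob S ∧ μ.prob S ≤ β} ∈ (I X).dom

def DI2 (I : ∀ (X : Type) [Fintype X], InfProc X) : Prop :=
  ∀ (X Y : Type) [Fintype X] [Fintype Y], ∀ KB : Set (PM X),
    KB ∈ (I X).dom → liftKB Y KB ∈ (I (X × Y)).dom

def DI3 (I : ∀ (X : Type) [Fintype X], InfProc X) : Prop :=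
  ∀ (X : Type) [Fintype X], ∀ KB₁ KB₂ : Set (PM X),
    KB₁ ∈ (I X).dom → KB₂ ∈ (I X).dom → KB₁ ∩ KB₂ ∈ (I X).dom

/-- An `X`-`Y` embedding: a homomorphism of set algebras. -/
structure Emb (X Y : Type) where
  f : Set X → Set Y
  map_union : ∀ S T, f (S ∪ T) = f S ∪ f T
  map_compl : ∀ S, f Sᶜ = (f S)ᶜ

/-- A faithful embedding. -/
def Emb.Faithful {X Y : Type} (e : Emb X Y) : Prop :=
  ∀ S T : Set X, S ⊆ T ↔ e.f S ⊆ e.f T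

section Embeddings

variable {X Y : Type} [Fintype X] [Fintype Y]

/-- `μ` and `ν` correspond under `f`. -/
def Corr (e : Emb X Y) (μ : PM X) (ν : PM Y) : Prop :=
  ∀ S : Set X, μ.prob S = ν.prob (e.f S)

/-- `f*(D)`, the union over `μ ∈ D` of the measures corresponding to `μ`. -/
def fstar (e : Emb X Y) (D : Set (PM X)) : Set (PM Y) :=
  {ν | ∃ μ ∈ D, Corr e μ ν}

/-- Sets of measures `D_X` and `D_Y` correspond under `f`. -/
def SetCorr (e : Emb X Y) (DX : Set (PM X)) (DY : Set (PM Y)) : Prop :=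
  (∀ ν ∈ DY, ∃ μ ∈ DX, Corr e μ ν) ∧ (∀ μ ∈ DX, ∃ ν ∈ DY, Corr e μ ν)

end Embeddings

/-- Representation independence of a finitary inference procedure. -/
def RepInd (I : ∀ (X : Type) [Fintype X], InfProc X) : Prop :=
  ∀ (X Y : Type) [Fintype X] [Fintype Y] (e : Emb X Y), e.Faithful →
    (∀ KB : Set (PM X), KB ∈ (I X).dom ↔ fstar e KB ∈ (I Y).dom) ∧
    (∀ KB : Set (PM X), KB ∈ (I X).dom → ∀ θ : Set (PM X),
      (Infers (I X) KB θ ↔ Infers (I Y) (fstar e KB) (fstar e θ)))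

def DI4 (I : ∀ (X : Type) [Fintype X], InfProc X) : Prop :=
  ∀ (X Y : Type) [Fintype X] [Fintype Y] (e : Emb X Y), e.Faithful →
    ∀ KB : Set (PM X), (KB ∈ (I X).dom ↔ fstar e KB ∈ (I Y).dom)

/-- `A ⇔ B` for sets of measures. -/
def iffSet {α : Type*} (A B : Set α) : Set α := (A ∩ B) ∪ (Aᶜ ∩ Bᶜ)

def DI5 (I : ∀ (X : Type) [Fintype X], InfProc X) : Prop :=
  ∀ (X Y : Type) [Fintype X] [Fintype Y] (KB : Set (PM (X × Y))) (e : Emb X Y),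
    e.Faithful → KB ∈ (I (X × Y)).dom → ∀ φ₁ : Set (PM X),
      KB ∩ iffSet (liftKB Y φ₁) {μ | margSnd μ ∈ fstar e φ₁} ∈ (I (X × Y)).dom

/-- Minimal default independence. -/
def MDI (I : ∀ (X : Type) [Fintype X], InfProc X) : Prop :=
  ∀ (X Y : Type) [Fintype X] [Fintype Y], ∀ KB : Set (PM X), ∀ (S : Set X) (T : Set Y),
    liftKB Y KB ∈ (I (X × Y)).dom →
    Infers (I (X × Y)) (liftKB Y KB)
      {μ | μ.prob (S ×ˢ T) = μ.prob (S ×ˢ (Set.univ : Set Y)) * μ.prob ((Set.univ : Set X) ×ˢ T)}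

/-- `KB` depends only on `S₁, …, S_k`. -/
def DependsOnly {X : Type} [Fintype X] {k : ℕ} (KB : Set (PM X)) (S : Fin k → Set X) : Prop :=
  ∀ μ μ' : PM X, (∀ i, μ.prob (S i) = μ'.prob (S i)) → (μ ∈ KB ↔ μ' ∈ KB)

/-- An atom over `S₁, …, S_k`. -/
def Atom {X : Type} {k : ℕ} (S : Fin k → Set X) (c : Fin k → Bool) : Set X :=
  ⋂ i, (if c i then S i else (S i)ᶜ)

section KL

variable {X : Type} [Fintype X]

/-- Absolute continuity of pmfs. -/
def AbsCont (μ' μ : PM X) : Prop := ∀ x, μ.pm x = 0 → μ'.pm x = 0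

/-- Relative entropy `D(μ'‖μ) ∈ [0,∞]` (it is `⊤` unless `μ' ≪ μ`). -/
noncomputable def KL (μ' μ : PM X) : EReal := by
  classical
  exact if AbsCont μ' μ then
    ((∑ x, μ'.pm x * Real.log (μ'.pm x / μ.pm x) : ℝ) : EReal)
  else ⊤

/-- The relative-entropy projection `μ|θ`. -/
def klProj (μ : PM X) (θ : Set (PM X)) : Set (PM X) :=
  {μ' | μ' ∈ θ ∧ KL μ' μ ≠ ⊤ ∧ ∀ μ'' ∈ θ, KL μ' μ ≤ KL μ'' μ}

/-- `D|θ = ⋃_{μ ∈ D} μ|θ`. -/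
def DProj (D : Set (PM X)) (θ : Set (PM X)) : Set (PM X) :=
  ⋃ μ ∈ D, klProj μ θ

end KL

section Products

variable {n : ℕ} {X : Fin n → Type} [∀ i, Fintype (X i)]

/-- The `i`-th marginal of a measure on a finite product. -/
noncomputable def margPi (μ : PM (∀ i, X i)) (i : Fin n) : PM (X i) where
  pm a := μ.prob {x | x i = a}
  nonneg a := PM.prob_nonneg _ _
  total := by
    classical
    unfold PM.prob
    rw [Finset.sum_comm]
    have h : ∀ x : (∀ i, X i),
        (∑ a, ({y : ∀ j, X j | y i = a}).indicator μ.pm x) = μ.pm x := by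
      intro x
      simp [Set.indicator_apply]
    simp only [h]
    exact μ.total

/-- `μ` is a product measure on `X₁ × ⋯ × Xₙ`. -/
def IsProdPM (μ : PM (∀ i, X i)) : Prop :=
  ∃ μi : ∀ i, PM (X i), ∀ U : ∀ i, Set (X i),
    μ.prob {x | ∀ i, x i ∈ U i} = ∏ i, (μi i).prob (U i)

end Products

/-- The set `P_Π(X)` of product measures. -/
def PPi {n : ℕ} (X : Fin n → Type) [∀ i, Fintype (X i)] : Set (PM (∀ i, X i)) :=
  {μ | IsProdPM μ}

/-- `e` is a product embedding. -/
def IsProdEmb {n : ℕ} {X Y : Fin n → Type} (e : Emb (∀ i, X i) (∀ i, Y i)) : Prop :=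
  ∃ ei : ∀ i, Emb (X i) (Y i), ∀ S : Set (∀ i, X i),
    e.f S = ⋃ x ∈ S, {y | ∀ i, y i ∈ (ei i).f {x i}}


section Stmt17Aux

open Finset Real

variable {X Y : Type} [Fintype X] [Fintype Y]

lemma PM.ext' {μ ν : PM X} (h : ∀ x, μ.pm x = ν.pm x) : μ = ν := by
  cases μ; cases ν; simp only [PM.mk.injEq]; exact funext h

open scoped Classical in
lemma PM.prob_eq (μ : PM X) (S : Set X) :
    μ.prob S = ∑ x, if x ∈ S then μ.pm x else 0 := by
  classical
  unfold PM.prob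
  refine Finset.sum_congr rfl fun x _ => ?_
  by_cases h : x ∈ S <;> simp [Set.indicator_apply, h]

lemma PM.prob_singleton (μ : PM X) (x : X) : μ.prob {x} = μ.pm x := by
  classical
  rw [PM.prob_eq]
  simp

/-- The log-sum inequality. -/
lemma logSum {ι : Type*} (s : Finset ι) (a b : ι → ℝ) (ha : ∀ i ∈ s, 0 ≤ a i)
    (hb : ∀ i ∈ s, 0 ≤ b i) (hab : ∀ i ∈ s, b i = 0 → a i = 0) :
    (∑ i ∈ s, a i) * Real.log ((∑ i ∈ s, a i) / (∑ i ∈ s, b i)) ≤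
      ∑ i ∈ s, a i * Real.log (a i / b i) := by
  rcases (Finset.sum_nonneg ha).eq_or_lt with h0 | hApos
  · replace h0 := h0.symm
    rw [h0, zero_mul]
    refine Finset.sum_nonneg fun i hi => ?_
    have hz : a i = 0 := (Finset.sum_eq_zero_iff_of_nonneg ha).1 h0 i hi
    simp [hz]
  · have hBpos : 0 < ∑ i ∈ s, b i := by
      rcases (Finset.sum_nonneg hb).eq_or_lt with h0 | h
      · exfalso
        have hz : ∀ i ∈ s, a i = 0 := fun i hi =>
          hab i hi ((Finset.sum_eq_zero_iff_of_nonneg hb).1 h0.symm i hi)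
        have : (∑ i ∈ s, a i) = 0 := Finset.sum_eq_zero hz
        linarith
      · exact h
    have key : ∀ i ∈ s,
        a i * Real.log ((∑ j ∈ s, a j) / (∑ j ∈ s, b j)) - a i * Real.log (a i / b i)
          ≤ (∑ j ∈ s, a j) / (∑ j ∈ s, b j) * b i - a i := by
      intro i hi
      rcases (ha i hi).eq_or_lt with hai | hai
      · rw [← hai]
        simp only [zero_mul, sub_zero, zero_sub, neg_zero]
        exact mul_nonneg (le_of_lt (by positivity)) (hb i hi)
      · have hbi : 0 < b i := by
          rcases (hb i hi).eq_or_lt with h | h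
          · exact absurd (hab i hi h.symm) (ne_of_gt hai)
          · exact h
        have ht : (0:ℝ) < (∑ j ∈ s, a j) / (∑ j ∈ s, b j) * (b i / a i) := by positivity
        have hlog := Real.log_le_sub_one_of_pos ht
        rw [Real.log_mul (by positivity) (by positivity)] at hlog
        have hba : Real.log (b i / a i) = - Real.log (a i / b i) := by
          rw [Real.log_div (ne_of_gt hbi) (ne_of_gt hai),
            Real.log_div (ne_of_gt hai) (ne_of_gt hbi)]
          ring
        rw [hba] at hlog
        have hmul := mul_le_mul_of_nonneg_left hlog (le_of_lt hai)
        have hid : a i * ((∑ j ∈ s, a j) / (∑ j ∈ s, b j) * (b i / a i))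
            = (∑ j ∈ s, a j) / (∑ j ∈ s, b j) * b i := by
          rw [mul_comm, mul_assoc, div_mul_cancel₀ _ (ne_of_gt hai)]
        have h3 : a i * (Real.log ((∑ j ∈ s, a j) / (∑ j ∈ s, b j)) + -Real.log (a i / b i))
            = a i * Real.log ((∑ j ∈ s, a j) / (∑ j ∈ s, b j))
              - a i * Real.log (a i / b i) := by ring
        have h4 : a i * ((∑ j ∈ s, a j) / (∑ j ∈ s, b j) * (b i / a i) - 1)
            = (∑ j ∈ s, a j) / (∑ j ∈ s, b j) * b i - a i := by
          rw [mul_sub, mul_one, hid]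
        rw [h3, h4] at hmul
        exact hmul
    have hsum := Finset.sum_le_sum key
    rw [Finset.sum_sub_distrib, ← Finset.sum_mul, Finset.sum_sub_distrib,
      ← Finset.mul_sum] at hsum
    have hc : (∑ i ∈ s, a i) / (∑ i ∈ s, b i) * (∑ i ∈ s, b i) = ∑ i ∈ s, a i :=
      div_mul_cancel₀ _ (ne_of_gt hBpos)
    linarith [hsum]

/-- Gibbs' inequality, real form. -/
lemma gibbs_nonneg {μ' μ : PM X} (h : AbsCont μ' μ) :
    0 ≤ ∑ x, μ'.pm x * Real.log (μ'.pm x / μ.pm x) := by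
  have := logSum Finset.univ μ'.pm μ.pm (fun x _ => μ'.nonneg x) (fun x _ => μ.nonneg x)
    (fun x _ hx => h x hx)
  rw [μ'.total, μ.total] at this
  simpa using this

/-- Gibbs' equality case. -/
lemma gibbs_eq {μ' μ : PM X} (h : AbsCont μ' μ)
    (hle : ∑ x, μ'.pm x * Real.log (μ'.pm x / μ.pm x) ≤ 0) : μ' = μ := by
  by_contra hne
  have hx : ∃ x, μ'.pm x ≠ μ.pm x := by
    by_contra hall
    push_neg at hall
    exact hne (PM.ext' hall)
  obtain ⟨x₀, hx₀⟩ := hx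
  have hterm : ∀ i : X, -(μ'.pm i * Real.log (μ'.pm i / μ.pm i)) ≤ μ.pm i - μ'.pm i := by
    intro i
    rcases (μ'.nonneg i).eq_or_lt with hai | hai
    · rw [← hai]
      simp [μ.nonneg i]
    · have hbi : 0 < μ.pm i := by
        rcases (μ.nonneg i).eq_or_lt with h' | h'
        · exact absurd (h i h'.symm) (ne_of_gt hai)
        · exact h'
      have h1 := Real.log_le_sub_one_of_pos (show (0:ℝ) < μ.pm i / μ'.pm i by positivity)
      have h2 := mul_le_mul_of_nonneg_left h1 (le_of_lt hai)
      have hba : Real.log (μ.pm i / μ'.pm i) = - Real.log (μ'.pm i / μ.pm i) := by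
        rw [Real.log_div (ne_of_gt hbi) (ne_of_gt hai),
          Real.log_div (ne_of_gt hai) (ne_of_gt hbi)]
        ring
      rw [hba] at h2
      have hid : μ'.pm i * (μ.pm i / μ'.pm i - 1) = μ.pm i - μ'.pm i := by
        rw [mul_sub, mul_one, mul_comm, div_mul_cancel₀ _ (ne_of_gt hai)]
      rw [hid] at h2
      linarith
  have hstrict : -(μ'.pm x₀ * Real.log (μ'.pm x₀ / μ.pm x₀)) < μ.pm x₀ - μ'.pm x₀ := by
    rcases (μ'.nonneg x₀).eq_or_lt with hai | hai
    · have hb0 : 0 < μ.pm x₀ := lt_of_le_of_ne (μ.nonneg x₀) (by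
        intro h'
        exact hx₀ (by rw [← hai, ← h']))
      rw [← hai]
      simp only [zero_mul, neg_zero, sub_zero]
      linarith
    · have hbi : 0 < μ.pm x₀ := by
        rcases (μ.nonneg x₀).eq_or_lt with h' | h'
        · exact absurd (h x₀ h'.symm) (ne_of_gt hai)
        · exact h'
      have hne1 : μ.pm x₀ / μ'.pm x₀ ≠ 1 := by
        intro h'
        exact hx₀ ((div_eq_one_iff_eq (ne_of_gt hai)).1 h').symm
      have h1 := Real.log_lt_sub_one_of_pos
        (show (0:ℝ) < μ.pm x₀ / μ'.pm x₀ by positivity) hne1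
      have h2 := mul_lt_mul_of_pos_left h1 hai
      have hba : Real.log (μ.pm x₀ / μ'.pm x₀) = - Real.log (μ'.pm x₀ / μ.pm x₀) := by
        rw [Real.log_div (ne_of_gt hbi) (ne_of_gt hai),
          Real.log_div (ne_of_gt hai) (ne_of_gt hbi)]
        ring
      rw [hba] at h2
      have hid : μ'.pm x₀ * (μ.pm x₀ / μ'.pm x₀ - 1) = μ.pm x₀ - μ'.pm x₀ := by
        rw [mul_sub, mul_one, mul_comm, div_mul_cancel₀ _ (ne_of_gt hai)]
      rw [hid] at h2
      linarith
  have hlt := Finset.sum_lt_sum (fun i _ => hterm i) ⟨x₀, Finset.mem_univ x₀, hstrict⟩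
  rw [Finset.sum_sub_distrib] at hlt
  rw [μ.total, μ'.total, Finset.sum_neg_distrib] at hlt
  linarith

end Stmt17Aux

section Stmt17Aux2

open Finset Real

variable {X Y : Type} [Fintype X] [Fintype Y]

open scoped Classical in
lemma sum_fiber (g : Y → X) (F : Y → ℝ) :
    ∑ x, ∑ y, (if g y = x then F y else 0) = ∑ y, F y := by
  rw [Finset.sum_comm]
  refine Finset.sum_congr rfl fun y _ => ?_
  simp

open scoped Classical in
noncomputable def PM.push (g : Y → X) (ν : PM Y) : PM X where
  pm x := ∑ y, if g y = x then ν.pm y else 0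
  nonneg x := Finset.sum_nonneg fun y _ => by
    split_ifs
    · exact ν.nonneg y
    · exact le_rfl
  total := by
    show (∑ x : X, ∑ y, if g y = x then ν.pm y else 0) = 1
    rw [sum_fiber]
    exact ν.total

open scoped Classical in
lemma PM.push_pm (g : Y → X) (ν : PM Y) (x : X) :
    (PM.push g ν).pm x = ∑ y, if g y = x then ν.pm y else 0 := rfl

open scoped Classical in
lemma PM.push_weight (g : Y → X) (ν : PM Y) (c : X → ℝ) :
    ∑ x, c x * (PM.push g ν).pm x = ∑ y, c (g y) * ν.pm y := by
  trans (∑ x, ∑ y, if g y = x then c (g y) * ν.pm y else 0)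
  · refine Finset.sum_congr rfl fun x _ => ?_
    rw [PM.push_pm, Finset.mul_sum]
    refine Finset.sum_congr rfl fun y _ => ?_
    by_cases h : g y = x
    · rw [if_pos h, if_pos h, h]
    · rw [if_neg h, if_neg h, mul_zero]
  · exact sum_fiber g _

open scoped Classical in
lemma PM.push_prob (g : Y → X) (ν : PM Y) (S : Set X) :
    (PM.push g ν).prob S = ν.prob (g ⁻¹' S) := by
  rw [PM.prob_eq]
  trans (∑ x, ∑ y, if g y = x then (if g y ∈ S then ν.pm y else 0) else 0)
  · refine Finset.sum_congr rfl fun x _ => ?_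
    by_cases hx : x ∈ S
    · rw [if_pos hx, PM.push_pm]
      refine Finset.sum_congr rfl fun y _ => ?_
      by_cases h : g y = x
      · rw [if_pos h, if_pos h, h, if_pos hx]
      · rw [if_neg h, if_neg h]
    · rw [if_neg hx]
      symm
      refine Finset.sum_eq_zero fun y _ => ?_
      by_cases h : g y = x
      · rw [if_pos h, h, if_neg hx]
      · rw [if_neg h]
  · rw [sum_fiber, PM.prob_eq]
    refine Finset.sum_congr rfl fun y _ => ?_
    simp [Set.mem_preimage]

lemma PM.push_push (g : Y → X) (s : X → Y) (hgs : ∀ x, g (s x) = x) (μ : PM X) :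
    PM.push g (PM.push s μ) = μ := by
  apply PM.ext'
  intro x
  have hpre : (s ⁻¹' (g ⁻¹' ({x} : Set X))) = {x} := by
    ext x'
    simp [hgs]
  have h1 : (PM.push g (PM.push s μ)).pm x = μ.prob {x} := by
    rw [← PM.prob_singleton, PM.push_prob, PM.push_prob, hpre]
  rw [h1, PM.prob_singleton]

open scoped Classical in
lemma absCont_push (g : Y → X) {ν' ν : PM Y} (h : AbsCont ν' ν) :
    AbsCont (PM.push g ν') (PM.push g ν) := by
  intro x hx
  rw [PM.push_pm] at hx ⊢
  have hnn : ∀ y ∈ Finset.univ (α := Y), 0 ≤ if g y = x then ν.pm y else 0 := by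
    intro y _
    split_ifs
    · exact ν.nonneg y
    · exact le_rfl
  have hz := (Finset.sum_eq_zero_iff_of_nonneg hnn).1 hx
  refine Finset.sum_eq_zero fun y hy => ?_
  by_cases hgy : g y = x
  · rw [if_pos hgy]
    have := hz y hy
    rw [if_pos hgy] at this
    exact h y this
  · rw [if_neg hgy]

open scoped Classical in
noncomputable def PM.lift (g : Y → X) (ν : PM Y) (μ' : PM X)
    (h : AbsCont μ' (PM.push g ν)) : PM Y where
  pm y := (if (PM.push g ν).pm (g y) = 0 then 0
    else μ'.pm (g y) / (PM.push g ν).pm (g y)) * ν.pm y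
  nonneg y := mul_nonneg (by
    split_ifs with h'
    · exact le_rfl
    · exact div_nonneg (μ'.nonneg _) ((PM.push g ν).nonneg _)) (ν.nonneg y)
  total := by
    have hw := PM.push_weight g ν
      (fun x => if (PM.push g ν).pm x = 0 then 0 else μ'.pm x / (PM.push g ν).pm x)
    rw [← hw]
    refine Eq.trans (Finset.sum_congr rfl fun x _ => ?_) μ'.total
    by_cases hx : (PM.push g ν).pm x = 0
    · rw [if_pos hx, zero_mul]
      exact (h x hx).symm
    · rw [if_neg hx, div_mul_cancel₀ _ hx]

open scoped Classical in
lemma PM.lift_pm (g : Y → X) (ν : PM Y) (μ' : PM X) (h : AbsCont μ' (PM.push g ν)) (y : Y) :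
    (PM.lift g ν μ' h).pm y = (if (PM.push g ν).pm (g y) = 0 then 0
      else μ'.pm (g y) / (PM.push g ν).pm (g y)) * ν.pm y := rfl

open scoped Classical in
lemma PM.push_lift (g : Y → X) (ν : PM Y) (μ' : PM X) (h : AbsCont μ' (PM.push g ν)) :
    PM.push g (PM.lift g ν μ' h) = μ' := by
  apply PM.ext'
  intro x
  rw [PM.push_pm]
  trans (∑ y, if g y = x then (if (PM.push g ν).pm x = 0 then 0
      else μ'.pm x / (PM.push g ν).pm x) * ν.pm y else 0)
  · refine Finset.sum_congr rfl fun y _ => ?_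
    by_cases hgy : g y = x
    · rw [if_pos hgy, if_pos hgy, PM.lift_pm, hgy]
    · rw [if_neg hgy, if_neg hgy]
  · have : ∀ y : Y, (if g y = x then (if (PM.push g ν).pm x = 0 then 0
        else μ'.pm x / (PM.push g ν).pm x) * ν.pm y else 0)
        = (if (PM.push g ν).pm x = 0 then 0 else μ'.pm x / (PM.push g ν).pm x)
          * (if g y = x then ν.pm y else 0) := by
      intro y
      by_cases hgy : g y = x
      · rw [if_pos hgy, if_pos hgy]
      · rw [if_neg hgy, if_neg hgy, mul_zero]
    rw [Finset.sum_congr rfl fun y _ => this y, ← Finset.mul_sum, ← PM.push_pm]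
    by_cases hx : (PM.push g ν).pm x = 0
    · rw [if_pos hx, zero_mul]
      exact (h x hx).symm
    · rw [if_neg hx, div_mul_cancel₀ _ hx]

lemma KL_of_absCont {μ' μ : PM X} (h : AbsCont μ' μ) :
    KL μ' μ = ((∑ x, μ'.pm x * Real.log (μ'.pm x / μ.pm x) : ℝ) : EReal) := by
  unfold KL
  rw [if_pos h]

lemma KL_of_not_absCont {μ' μ : PM X} (h : ¬ AbsCont μ' μ) : KL μ' μ = ⊤ := by
  unfold KL
  rw [if_neg h]

lemma absCont_of_KL_ne_top {μ' μ : PM X} (h : KL μ' μ ≠ ⊤) : AbsCont μ' μ := by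
  by_contra hac
  exact h (KL_of_not_absCont hac)

lemma KL_self (μ : PM X) : KL μ μ = ((0:ℝ) : EReal) := by
  rw [KL_of_absCont (fun x hx => hx)]
  have h0 : ∑ x, μ.pm x * Real.log (μ.pm x / μ.pm x) = 0 :=
    Finset.sum_eq_zero fun x _ => by
      by_cases hx : μ.pm x = 0
      · rw [hx, zero_mul]
      · rw [div_self hx, Real.log_one, mul_zero]
  rw [h0]

lemma KL_nonneg' (μ' μ : PM X) : (0 : EReal) ≤ KL μ' μ := by
  by_cases h : AbsCont μ' μ
  · rw [KL_of_absCont h]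
    exact_mod_cast gibbs_nonneg h
  · rw [KL_of_not_absCont h]
    exact le_top

/-- Data processing inequality. -/
lemma KL_push_le (g : Y → X) (ν' ν : PM Y) :
    KL (PM.push g ν') (PM.push g ν) ≤ KL ν' ν := by
  classical
  by_cases hac : AbsCont ν' ν
  · have hac' : AbsCont (PM.push g ν') (PM.push g ν) := absCont_push g hac
    rw [KL_of_absCont hac, KL_of_absCont hac']
    apply EReal.coe_le_coe_iff.2
    have hfib := Finset.sum_fiberwise Finset.univ g
      (fun y => ν'.pm y * Real.log (ν'.pm y / ν.pm y))
    rw [← hfib]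
    refine Finset.sum_le_sum fun x _ => ?_
    have e1 : (PM.push g ν').pm x = ∑ y ∈ Finset.univ.filter (fun y => g y = x), ν'.pm y := by
      rw [Finset.sum_filter, PM.push_pm]
    have e2 : (PM.push g ν).pm x = ∑ y ∈ Finset.univ.filter (fun y => g y = x), ν.pm y := by
      rw [Finset.sum_filter, PM.push_pm]
    rw [e1, e2]
    exact logSum _ ν'.pm ν.pm (fun y _ => ν'.nonneg y) (fun y _ => ν.nonneg y)
      (fun y _ hy => hac y hy)
  · rw [KL_of_not_absCont hac]
    exact le_top

open scoped Classical in
lemma KL_lift (g : Y → X) (ν : PM Y) (μ' : PM X) (h : AbsCont μ' (PM.push g ν)) :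
    KL (PM.lift g ν μ' h) ν = KL μ' (PM.push g ν) := by
  have hac : AbsCont (PM.lift g ν μ' h) ν := fun y hy => by
    rw [PM.lift_pm, hy, mul_zero]
  rw [KL_of_absCont hac, KL_of_absCont h]
  have hterm : ∀ cy νy : ℝ, (cy * νy) * Real.log ((cy * νy) / νy) = (cy * Real.log cy) * νy := by
    intro cy νy
    by_cases hν : νy = 0
    · simp [hν]
    · rw [mul_div_assoc, div_self hν, mul_one]
      ring
  have hreal : ∑ y, (PM.lift g ν μ' h).pm y * Real.log ((PM.lift g ν μ' h).pm y / ν.pm y)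
      = ∑ x, μ'.pm x * Real.log (μ'.pm x / (PM.push g ν).pm x) := by
    have hw := PM.push_weight g ν
      (fun x => (if (PM.push g ν).pm x = 0 then 0 else μ'.pm x / (PM.push g ν).pm x)
        * Real.log (if (PM.push g ν).pm x = 0 then 0 else μ'.pm x / (PM.push g ν).pm x))
    calc ∑ y, (PM.lift g ν μ' h).pm y * Real.log ((PM.lift g ν μ' h).pm y / ν.pm y)
        = ∑ y, ((if (PM.push g ν).pm (g y) = 0 then 0
            else μ'.pm (g y) / (PM.push g ν).pm (g y))
          * Real.log (if (PM.push g ν).pm (g y) = 0 then 0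
            else μ'.pm (g y) / (PM.push g ν).pm (g y))) * ν.pm y := by
          refine Finset.sum_congr rfl fun y _ => ?_
          rw [PM.lift_pm]
          exact hterm _ _
      _ = ∑ x, ((if (PM.push g ν).pm x = 0 then 0 else μ'.pm x / (PM.push g ν).pm x)
          * Real.log (if (PM.push g ν).pm x = 0 then 0
            else μ'.pm x / (PM.push g ν).pm x)) * (PM.push g ν).pm x := hw.symm
      _ = ∑ x, μ'.pm x * Real.log (μ'.pm x / (PM.push g ν).pm x) := by
          refine Finset.sum_congr rfl fun x _ => ?_
          by_cases hx : (PM.push g ν).pm x = 0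
          · rw [if_pos hx, hx, mul_zero, h x hx, zero_mul]
          · rw [if_neg hx, mul_right_comm, div_mul_cancel₀ _ hx]
  rw [hreal]

end Stmt17Aux2

section Stmt17Aux3
set_option linter.unusedSectionVars false

open Finset

variable {X Y : Type} [Fintype X] [Fintype Y]

lemma Emb.f_univ (e : Emb X Y) : e.f Set.univ = Set.univ := by
  have h := e.map_union (∅ : Set X) (∅ : Set X)ᶜ
  rw [Set.union_compl_self] at h
  rw [h, e.map_compl, Set.union_compl_self]

lemma Emb.f_empty (e : Emb X Y) : e.f ∅ = ∅ := by
  have h := e.map_compl (Set.univ : Set X)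
  rw [Set.compl_univ] at h
  rw [h, e.f_univ, Set.compl_univ]

lemma Emb.f_inter (e : Emb X Y) (S T : Set X) : e.f (S ∩ T) = e.f S ∩ e.f T := by
  have h : S ∩ T = (Sᶜ ∪ Tᶜ)ᶜ := by
    rw [Set.compl_union, compl_compl, compl_compl]
  rw [h, e.map_compl, e.map_union, e.map_compl, e.map_compl, Set.compl_union,
    compl_compl, compl_compl]

lemma Emb.f_finset (e : Emb X Y) (s : Finset X) :
    e.f (↑s) = ⋃ x ∈ s, e.f {x} := by
  classical
  induction s using Finset.induction_on with
  | empty => simpa using e.f_empty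
  | insert _ _ hnotmem ih =>
    rename_i a s
    rw [Finset.coe_insert, Set.insert_eq, e.map_union, ih, Finset.set_biUnion_insert]

/-- Structure theorem for faithful embeddings of finite set algebras. -/
lemma Emb.exists_g (e : Emb X Y) (hf : e.Faithful) :
    ∃ g : Y → X, Function.Surjective g ∧ ∀ S : Set X, e.f S = g ⁻¹' S := by
  classical
  have hcover : ∀ y : Y, ∃ x : X, y ∈ e.f {x} := by
    intro y
    have h1 : y ∈ e.f Set.univ := by
      rw [e.f_univ]
      trivial
    have h2 : (Set.univ : Set X) = ↑(Finset.univ : Finset X) := by simp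
    rw [h2, e.f_finset] at h1
    simpa using h1
  have huniq : ∀ (y : Y) (x x' : X), y ∈ e.f {x} → y ∈ e.f {x'} → x = x' := by
    intro y x x' h1 h2
    by_contra hne
    have hdisj : ({x} : Set X) ∩ {x'} = ∅ := by
      ext z
      simp only [Set.mem_inter_iff, Set.mem_singleton_iff, Set.mem_empty_iff_false, iff_false,
        not_and]
      rintro rfl
      exact fun h => hne h
    have h3 := e.f_inter {x} {x'}
    rw [hdisj, e.f_empty] at h3
    have : y ∈ (∅ : Set Y) := by
      rw [h3]
      exact ⟨h1, h2⟩
    exact this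
  choose g hg using hcover
  refine ⟨g, ?_, ?_⟩
  · intro x
    have hne : e.f {x} ≠ ∅ := by
      intro h0
      have hsub : ({x} : Set X) ⊆ ∅ := by
        refine (hf {x} ∅).2 ?_
        rw [e.f_empty, h0]
      simpa using hsub (Set.mem_singleton x)
    obtain ⟨y, hy⟩ := Set.nonempty_iff_ne_empty.2 hne
    exact ⟨y, huniq y (g y) x (hg y) hy⟩
  · intro S
    ext y
    simp only [Set.mem_preimage]
    constructor
    · intro hyS
      have hS : S = ↑S.toFinset := by simp
      rw [hS, e.f_finset] at hyS
      simp only [Set.mem_iUnion] at hyS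
      obtain ⟨x, hxS, hyx⟩ := hyS
      rw [huniq y (g y) x (hg y) hyx]
      exact Set.mem_toFinset.1 hxS
    · intro hgy
      have hsub : ({g y} : Set X) ⊆ S := Set.singleton_subset_iff.2 hgy
      exact (hf _ _).1 hsub (hg y)

lemma corr_iff_push {e : Emb X Y} {g : Y → X} (hgf : ∀ S : Set X, e.f S = g ⁻¹' S)
    (μ : PM X) (ν : PM Y) : Corr e μ ν ↔ PM.push g ν = μ := by
  constructor
  · intro hc
    apply PM.ext'
    intro x
    have h1 := hc {x}
    rw [hgf, ← PM.push_prob] at h1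
    rw [← PM.prob_singleton, ← PM.prob_singleton, h1]
  · rintro rfl
    intro S
    rw [hgf, ← PM.push_prob]

lemma mem_fstar_iff {e : Emb X Y} {g : Y → X} (hgf : ∀ S : Set X, e.f S = g ⁻¹' S)
    (D : Set (PM X)) (ν : PM Y) : ν ∈ fstar e D ↔ PM.push g ν ∈ D := by
  constructor
  · rintro ⟨μ, hμ, hc⟩
    rw [(corr_iff_push hgf μ ν).1 hc]
    exact hμ
  · intro h
    exact ⟨PM.push g ν, h, (corr_iff_push hgf _ ν).2 rfl⟩

lemma klProj_univ (μ : PM X) : klProj μ (Set.univ : Set (PM X)) = {μ} := by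
  ext μ'
  constructor
  · rintro ⟨-, hne, hmin⟩
    have h1 := hmin μ trivial
    have hac := absCont_of_KL_ne_top hne
    rw [KL_of_absCont hac, KL_self] at h1
    have h2 : ∑ x, μ'.pm x * Real.log (μ'.pm x / μ.pm x) ≤ 0 := by exact_mod_cast h1
    exact gibbs_eq hac h2
  · rintro rfl
    refine ⟨trivial, ?_, fun μ'' _ => ?_⟩
    · rw [KL_self]
      exact EReal.coe_ne_top 0
    · rw [KL_self]
      exact_mod_cast KL_nonneg' μ'' μ'

lemma DProj_univ (D : Set (PM X)) : DProj D (Set.univ : Set (PM X)) = D := by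
  unfold DProj
  ext μ
  simp [klProj_univ, eq_comm]

end Stmt17Aux3

/-- the inference procedure `I^P` induced by a prior function
`P` is invariant under a faithful embedding `f` iff `P(X)` and `P(Y)`
correspond under `f`. -/
theorem stmt17 (P : ∀ (X : Type) [Fintype X], Set (PM X))
    (X Y : Type) [Fintype X] [Fintype Y] (e : Emb X Y) (hf : e.Faithful) :
    (∀ KB θ : Set (PM X),
        (DProj (P X) KB ⊆ θ ↔ DProj (P Y) (fstar e KB) ⊆ fstar e θ))
      ↔ SetCorr e (P X) (P Y) := by
  
  obtain ⟨g, hgs, hgf⟩ := e.exists_g hf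
  have hfu : fstar e (Set.univ : Set (PM X)) = Set.univ := by
    ext ν'
    simp only [Set.mem_univ, iff_true]
    exact (mem_fstar_iff hgf _ ν').2 trivial
  constructor
  · intro h
    constructor
    · intro ν hν
      have hXsub : DProj (P X) Set.univ ⊆ P X := by
        rw [DProj_univ]
      have h2 := (h Set.univ (P X)).1 hXsub
      rw [hfu, DProj_univ] at h2
      exact h2 hν
    · intro μ hμ
      have hsub : DProj (P Y) (fstar e Set.univ) ⊆
          fstar e {μ' | ∃ ν ∈ P Y, Corr e μ' ν} := by
        rw [hfu, DProj_univ]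
        intro ν hν
        refine (mem_fstar_iff hgf _ ν).2 ?_
        exact ⟨ν, hν, (corr_iff_push hgf _ ν).2 rfl⟩
      have h2 := (h Set.univ {μ' | ∃ ν ∈ P Y, Corr e μ' ν}).2 hsub
      rw [DProj_univ] at h2
      exact h2 hμ
  · intro hc KB θ
    constructor
    · intro hsub ν' hν'
      simp only [DProj, Set.mem_iUnion] at hν'
      obtain ⟨ν, hν, hmem, hne, hmin⟩ := hν'
      have hμ : PM.push g ν ∈ P X := by
        obtain ⟨μ₀, hμ₀, hc₀⟩ := hc.1 ν hν
        rw [(corr_iff_push hgf μ₀ ν).1 hc₀]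
        exact hμ₀
      have hKB : PM.push g ν' ∈ KB := (mem_fstar_iff hgf _ ν').1 hmem
      have hdp := KL_push_le g ν' ν
      have hne' : KL (PM.push g ν') (PM.push g ν) ≠ ⊤ := ne_top_of_le_ne_top hne hdp
      have hmin' : ∀ μ'' ∈ KB, KL (PM.push g ν') (PM.push g ν) ≤ KL μ'' (PM.push g ν) := by
        intro μ'' h''
        by_cases htop : KL μ'' (PM.push g ν) = ⊤
        · rw [htop]
          exact le_top
        · have hac'' := absCont_of_KL_ne_top htop
          have hν'' : PM.lift g ν μ'' hac'' ∈ fstar e KB := by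
            refine (mem_fstar_iff hgf _ _).2 ?_
            rw [PM.push_lift]
            exact h''
          calc KL (PM.push g ν') (PM.push g ν) ≤ KL ν' ν := hdp
            _ ≤ KL (PM.lift g ν μ'' hac'') ν := hmin _ hν''
            _ = KL μ'' (PM.push g ν) := KL_lift g ν μ'' hac''
      have hmemD : PM.push g ν' ∈ DProj (P X) KB :=
        Set.mem_biUnion hμ ⟨hKB, hne', hmin'⟩
      exact ⟨PM.push g ν', hsub hmemD, (corr_iff_push hgf _ _).2 rfl⟩
    · intro hsub μ' hμ'
      simp only [DProj, Set.mem_iUnion] at hμ'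
      obtain ⟨μ, hμ, hmemKB, hne, hmin⟩ := hμ'
      obtain ⟨ν, hν, hcorr⟩ := hc.2 μ hμ
      have hpush : PM.push g ν = μ := (corr_iff_push hgf μ ν).1 hcorr
      have hac : AbsCont μ' (PM.push g ν) := by
        rw [hpush]
        exact absCont_of_KL_ne_top hne
      have hpush' : PM.push g (PM.lift g ν μ' hac) = μ' := PM.push_lift g ν μ' hac
      have hKL : KL (PM.lift g ν μ' hac) ν = KL μ' μ := by
        rw [KL_lift, hpush]
      have hproj' : PM.lift g ν μ' hac ∈ klProj ν (fstar e KB) := by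
        refine ⟨(mem_fstar_iff hgf _ _).2 (by rw [hpush']; exact hmemKB),
          (by rw [hKL]; exact hne), ?_⟩
        intro ν'' h''
        have h1 : PM.push g ν'' ∈ KB := (mem_fstar_iff hgf _ _).1 h''
        rw [hKL]
        calc KL μ' μ ≤ KL (PM.push g ν'') μ := hmin _ h1
          _ = KL (PM.push g ν'') (PM.push g ν) := by rw [hpush]
          _ ≤ KL ν'' ν := KL_push_le g ν'' ν
      have hmemD : PM.lift g ν μ' hac ∈ DProj (P Y) (fstar e KB) :=
        Set.mem_biUnion hν hproj'
      obtain ⟨μ'', hμ''θ, hc''⟩ := hsub hmemD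
      have heq : μ'' = μ' := by
        rw [← (corr_iff_push hgf μ'' _).1 hc'', hpush']
      rw [← heq]
      exact hμ''θ
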